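/- With P, Q standard parabolics determined by S, T, let u, w ∈ W_{S,T} with u ≰ w in Bruhat order, K an open compact subgroup in good position, a strictly dominant for M_Q, i ≥ 0, and g ∈ G with g k a^{-i} ∈ PẇmK for some k ∈ K and m ∈ M_Q. Then PgK ∩ PůQ⁻ = ∅; in particular g ∉ PůQ⁻. -/

import Mathlib

/-- Bruhat order: `v ≤ w` iff some reduced word for `w` has a subword whose product is `v`. -/
def BruhatLE {B W : Type*} [Group W] {M : CoxeterMatrix B} (cs : CoxeterSystem M W)
    (v w : W) : Prop :=
  ∃ l : List B, cs.IsReduced l ∧ cs.wordProd l = w ∧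
    ∃ l' : List B, l'.Sublist l ∧ cs.wordProd l' = v

/-- The standard parabolic subgroup `W(S)` of the Weyl group. -/
def WPar {B W : Type*} [Group W] {M : CoxeterMatrix B} (cs : CoxeterSystem M W)
    (S : Set B) : Subgroup W :=
  Subgroup.closure (cs.simple '' S)

/-- `W_{S,T}`: the set of minimal length double coset representatives in `W(S)\W/W(T)`. -/
def WST {B W : Type*} [Group W] {M : CoxeterMatrix B} (cs : CoxeterSystem M W)
    (S T : Set B) : Set W :=
  {u | ∀ v : W, (∃ x ∈ WPar cs S, ∃ y ∈ WPar cs T, v = x * u * y) →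
    cs.length u ≤ cs.length v}

/-- The double coset `H·ẇ·H'` associated to `w ∈ W`. -/
def bruhatCell {W G : Type*} [Group G] (H H' : Subgroup G) (dot : W → G) (w : W) : Set G :=
  {g | ∃ b1 ∈ H, ∃ b2 ∈ H', g = b1 * dot w * b2}

/-- With `P, Q` standard parabolics determined by `S, T`, let `u, w ∈ W_{S,T}` with `u ≰ w`
in the Bruhat order, `K` an open compact subgroup in good position, `a` strictly dominant
for `M_Q`, `i ≥ 0`, and `g ∈ G` with `g k a^{-i} ∈ P ẇ m K` for some `k ∈ K`, `m ∈ M_Q`.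
Then `PgK ∩ PůQ⁻ = ∅`; in particular `g ∉ PůQ⁻`. -/
theorem support_avoids_lower_cell
    {B W G : Type*} [Group W] [Group G] [TopologicalSpace G] [IsTopologicalGroup G]
    {M : CoxeterMatrix B}
    (cs : CoxeterSystem M W) (Bp Bm : Subgroup G) (dot : W → G)
    (P Q Qneg Mq U Uneg K : Subgroup G) (a : G) (S T : Set B)
    (hdot1 : dot 1 = 1)
    (hP : (P : Set G) = ⋃ x ∈ WPar cs S, bruhatCell Bp Bp dot x)
    (hQ : (Q : Set G) = ⋃ y ∈ WPar cs T, bruhatCell Bp Bp dot y)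
    (hQneg : (Qneg : Set G) = ⋃ y ∈ WPar cs T, bruhatCell Bm Bm dot y)
    (hcrit : ∀ w w' : W, w ∈ WST cs S T → w' ∈ WST cs S T →
      (({g : G | ∃ p ∈ P, ∃ q ∈ Q, g = p * dot w * q} ∩
        {g : G | ∃ p ∈ P, ∃ q ∈ Qneg, g = p * dot w' * q}).Nonempty ↔ BruhatLE cs w' w))
    (hKopen : IsOpen (K : Set G)) (hKcompact : IsCompact (K : Set G))
    (hIwahori : ∀ k ∈ K, ∃ x ∈ U ⊓ K, ∃ m ∈ Mq ⊓ K, ∃ v ∈ Uneg ⊓ K, k = x * m * v)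
    (hMQ : Mq ≤ Q) (hUQ : U ≤ Q) (hUnegQneg : Uneg ≤ Qneg)
    (haM : a ∈ Mq) (haZ : ∀ m ∈ Mq, a * m = m * a)
    (hcontractU : ∀ j : ℕ, ∀ x ∈ U ⊓ K, a ^ j * x * (a ^ j)⁻¹ ∈ K)
    (hcontractUneg : ∀ j : ℕ, ∀ v ∈ Uneg ⊓ K, (a ^ j)⁻¹ * v * a ^ j ∈ K)
    (u w : W) (hu : u ∈ WST cs S T) (hw : w ∈ WST cs S T)
    (hnle : ¬ BruhatLE cs u w)
    (i : ℕ) (g : G)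
    (hg : ∃ k ∈ K, ∃ m ∈ Mq, ∃ p ∈ P, ∃ k' ∈ K,
      g * k * (a ^ i)⁻¹ = p * dot w * m * k') :
    (∀ x : G, (∃ p ∈ P, ∃ k ∈ K, x = p * g * k) →
      x ∉ {y : G | ∃ p ∈ P, ∃ q ∈ Qneg, y = p * dot u * q}) ∧
    g ∉ {y : G | ∃ p ∈ P, ∃ q ∈ Qneg, y = p * dot u * q} := by
  obtain ⟨k, hk, m, hm, p, hp, k', hk', heq⟩ := hg
  -- K a^i K ⊆ Q · (Uneg ∩ K)
  have decomp : ∀ k₁ ∈ K, ∀ k₂ ∈ K, ∃ q ∈ Q, ∃ v ∈ Uneg ⊓ K, k₁ * a ^ i * k₂ = q * v := by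
    intro k₁ hk₁ k₂ hk₂
    obtain ⟨x₁, hx₁, m₁, hm₁, v₁, hv₁, h1⟩ := hIwahori k₁ hk₁
    have hv₁' : (a ^ i)⁻¹ * v₁ * a ^ i ∈ K := hcontractUneg i v₁ hv₁
    obtain ⟨x₃, hx₃, m₃, hm₃, v₃, hv₃, h3⟩ :=
      hIwahori ((a ^ i)⁻¹ * v₁ * a ^ i * k₂) (K.mul_mem hv₁' hk₂)
    have haQ : a ^ i ∈ Q := Q.pow_mem (hMQ haM) i
    have hcomm : a ^ i * m₃ = m₃ * a ^ i :=
      Commute.pow_left (haZ m₃ (Subgroup.mem_inf.mp hm₃).1) i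
    refine ⟨x₁ * m₁ * (a ^ i * x₃ * (a ^ i)⁻¹) * m₃ * a ^ i, ?_, v₃, hv₃, ?_⟩
    · exact mul_mem (mul_mem (mul_mem
        (mul_mem (hUQ (Subgroup.mem_inf.mp hx₁).1) (hMQ (Subgroup.mem_inf.mp hm₁).1))
        (mul_mem (mul_mem haQ (hUQ (Subgroup.mem_inf.mp hx₃).1)) (Q.inv_mem haQ)))
        (hMQ (Subgroup.mem_inf.mp hm₃).1)) haQ
    · calc k₁ * a ^ i * k₂
          = x₁ * m₁ * (a ^ i * ((a ^ i)⁻¹ * v₁ * a ^ i * k₂)) := by rw [h1]; group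
        _ = x₁ * m₁ * (a ^ i * (x₃ * m₃ * v₃)) := by rw [h3]
        _ = x₁ * m₁ * ((a ^ i * x₃ * (a ^ i)⁻¹) * (a ^ i * m₃) * v₃) := by group
        _ = x₁ * m₁ * ((a ^ i * x₃ * (a ^ i)⁻¹) * (m₃ * a ^ i) * v₃) := by rw [hcomm]
        _ = x₁ * m₁ * (a ^ i * x₃ * (a ^ i)⁻¹) * m₃ * a ^ i * v₃ := by group
  have hg2 : g = p * dot w * m * k' * a ^ i * k⁻¹ := by rw [← heq]; group
  have key : ∀ x : G, (∃ p ∈ P, ∃ k ∈ K, x = p * g * k) →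
      x ∉ {y : G | ∃ p ∈ P, ∃ q ∈ Qneg, y = p * dot u * q} := by
    rintro x ⟨p', hp', k'', hk'', hx⟩ ⟨p₂, hp₂, qn, hqn, hx2⟩
    obtain ⟨q, hq, v, hv, heq2⟩ := decomp k' hk' (k⁻¹ * k'') (K.mul_mem (K.inv_mem hk) hk'')
    refine hnle ((hcrit w u hw hu).mp ⟨x * v⁻¹, ⟨p' * p, mul_mem hp' hp, m * q,
      mul_mem (hMQ hm) hq, ?_⟩, ⟨p₂, hp₂, qn * v⁻¹,
      mul_mem hqn (Qneg.inv_mem (hUnegQneg (Subgroup.mem_inf.mp hv).1)), ?_⟩⟩)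
    · calc x * v⁻¹ = p' * p * dot w * m * (k' * a ^ i * (k⁻¹ * k'')) * v⁻¹ := by
            rw [hx, hg2]; group
        _ = p' * p * dot w * m * (q * v) * v⁻¹ := by rw [heq2]
        _ = p' * p * dot w * (m * q) := by group
    · rw [hx2]; group
  exact ⟨key, fun h => key g ⟨1, one_mem P, 1, one_mem K, by group⟩ h⟩
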